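/- arXiv:1806.05051 — 4 statements merged into one kernel-verified Lean document; each statement's English description precedes it below -/
import Mathlib

section
/- Let Ω ⊆ ℝ³ be open, f ∈ L¹(Ω), γ > 0. Define F(u) = ∫_Ω f·u dx + γ·|Du|(Ω) for u ∈ BV(Ω; [0,1]). If u is a minimizer of F over L^∞(Ω;[0,1]) ∩ BV, then by the coarea formula F(u) = ∫_0^1 F(𝟙_{{u > t}}) dt, and consequently there exists t ∈ [0,1) such that the characteristic function 𝟙_{{u > t}} is also a minimizer of F, taking only the values 0 and 1. -/
open MeasureTheory Set
open scoped ENNReal NNReal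

section aux

variable {α : Type*} [MeasurableSpace α]

/-- Upper Lebesgue integral: infimum of lintegrals of measurable majorants. -/
noncomputable def upperL (ν : Measure α) (h : α → ℝ≥0∞) : ℝ≥0∞ :=
  ⨅ (g : α → ℝ≥0∞) (_ : Measurable g) (_ : h ≤ g), ∫⁻ x, g x ∂ν

theorem le_upperL (ν : Measure α) (h : α → ℝ≥0∞) : ∫⁻ x, h x ∂ν ≤ upperL ν h :=
  le_iInf fun g => le_iInf fun _ => le_iInf fun hle => lintegral_mono hle

theorem upperL_le {ν : Measure α} {h g : α → ℝ≥0∞} (hg : Measurable g) (hle : h ≤ g) :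
    upperL ν h ≤ ∫⁻ x, g x ∂ν := by
  exact iInf_le_of_le g (iInf_le_of_le hg (iInf_le_of_le hle le_rfl))

theorem upperL_anti {ν : Measure α} {h h' : α → ℝ≥0∞} (hle : h ≤ h') :
    upperL ν h ≤ upperL ν h' :=
  le_iInf fun g => le_iInf fun hg => le_iInf fun hle' =>
    upperL_le hg (le_trans hle hle')

theorem upperL_eq_of_aemeasurable {ν : Measure α} {h : α → ℝ≥0∞}
    (hh : AEMeasurable h ν) : upperL ν h = ∫⁻ x, h x ∂ν := by
  classical
  refine le_antisymm ?_ (le_upperL ν h)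
  set N := toMeasurable ν {x | h x ≠ hh.mk h x} with hN
  have hNmeas : MeasurableSet N := measurableSet_toMeasurable _ _
  have hNnull : ν N = 0 := by
    rw [hN, measure_toMeasurable]
    exact hh.ae_eq_mk
  set g : α → ℝ≥0∞ := fun x => if x ∈ N then ⊤ else hh.mk h x with hg
  have hgmeas : Measurable g := Measurable.ite hNmeas measurable_const hh.measurable_mk
  have hhg : h ≤ g := by
    intro x
    by_cases hx : x ∈ N
    · simp [hg, hx]
    · have : h x = hh.mk h x := by
        by_contra hne
        exact hx (subset_toMeasurable _ _ hne)
      simp [hg, hx, this]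
  have : ∫⁻ x, g x ∂ν = ∫⁻ x, h x ∂ν := by
    refine lintegral_congr_ae ?_
    filter_upwards [measure_eq_zero_iff_ae_notMem.mp hNnull] with x hx
    have : h x = hh.mk h x := by
      by_contra hne
      exact hx (subset_toMeasurable _ _ hne)
    simp [hg, hx, this]
  calc upperL ν h ≤ ∫⁻ x, g x ∂ν := upperL_le hgmeas hhg
    _ = _ := this

theorem aemeasurable_of_upperL_eq {ν : Measure α} {h : α → ℝ≥0∞}
    (hfin : ∫⁻ x, h x ∂ν ≠ ⊤) (heq : upperL ν h = ∫⁻ x, h x ∂ν) :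
    AEMeasurable h ν := by
  -- a measurable minorant with the same integral
  obtain ⟨g₀, hg₀m, hg₀le, hg₀⟩ := exists_measurable_le_lintegral_eq ν h
  -- a sequence of majorants with integrals approaching `upperL`
  have hU : upperL ν h ≠ ⊤ := by rw [heq]; exact hfin
  have hseq : ∀ n : ℕ, ∃ g : α → ℝ≥0∞, Measurable g ∧ h ≤ g ∧
      ∫⁻ x, g x ∂ν < upperL ν h + (n : ℝ≥0∞)⁻¹ := by
    intro n
    by_contra hcon
    push_neg at hcon
    have : upperL ν h + (n : ℝ≥0∞)⁻¹ ≤ upperL ν h :=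
      le_iInf fun g => le_iInf fun hg => le_iInf fun hle => hcon g hg hle
    have hlt : upperL ν h < upperL ν h + (n : ℝ≥0∞)⁻¹ :=
      ENNReal.lt_add_right hU (ENNReal.inv_ne_zero.mpr (ENNReal.natCast_ne_top n))
    exact absurd (this.trans_lt hlt) (lt_irrefl _)
  choose g hgm hgle hglt using hseq
  set G : α → ℝ≥0∞ := fun x => ⨅ n, g n x with hG
  have hGm : Measurable G := Measurable.iInf fun n => hgm n
  have hGle : h ≤ G := fun x => le_iInf fun n => hgle n x
  have hGint : ∫⁻ x, G x ∂ν = upperL ν h := by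
    refine le_antisymm ?_ (upperL_le hGm hGle)
    refine ENNReal.le_of_forall_pos_le_add fun ε hε _ => ?_
    obtain ⟨n, hn⟩ := ENNReal.exists_inv_nat_lt (by exact_mod_cast hε.ne' : (ε : ℝ≥0∞) ≠ 0)
    calc ∫⁻ x, G x ∂ν ≤ ∫⁻ x, g n x ∂ν := lintegral_mono fun x => iInf_le _ n
      _ ≤ upperL ν h + (n : ℝ≥0∞)⁻¹ := (hglt n).le
      _ ≤ upperL ν h + ε := by exact add_le_add_right hn.le _
  -- g₀ ≤ h ≤ G with equal finite integrals, so g₀ = G a.e.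
  have hint_eq : ∫⁻ x, G x ∂ν = ∫⁻ x, g₀ x ∂ν := by rw [hGint, heq, hg₀]
  have hg₀fin : ∫⁻ x, g₀ x ∂ν ≠ ⊤ := by rw [← hg₀]; exact hfin
  have hg₀G : g₀ ≤ᵐ[ν] G := Filter.Eventually.of_forall fun x => (hg₀le x).trans (hGle x)
  have hsub : ∫⁻ x, (G x - g₀ x) ∂ν = 0 := by
    rw [lintegral_sub hg₀m hg₀fin hg₀G, hint_eq, tsub_self]
  have hae : (fun x => G x - g₀ x) =ᵐ[ν] 0 := (lintegral_eq_zero_iff (hGm.sub hg₀m)).mp hsub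
  refine ⟨g₀, hg₀m, ?_⟩
  filter_upwards [hae] with x hx
  have hGx : G x ≤ g₀ x := tsub_eq_zero_iff_le.mp hx
  exact le_antisymm ((hGle x).trans hGx) (hg₀le x)

/-- For an antitone family `h : ℝ → α → ℝ≥0∞` with finite lower integrals, the set of
parameters where `h t` is a.e. measurable is a measurable set, and the lintegral is a
measurable function of the parameter. -/
theorem antitone_family_measurable {ν : Measure α} {h : ℝ → α → ℝ≥0∞}
    (hanti : ∀ ⦃s t : ℝ⦄, s ≤ t → h t ≤ h s)
    (hfin : ∀ t, ∫⁻ x, h t x ∂ν ≠ ⊤) :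
    MeasurableSet {t : ℝ | AEMeasurable (h t) ν} ∧
      Measurable (fun t => ∫⁻ x, h t x ∂ν) := by
  have hlanti : Antitone (fun t => ∫⁻ x, h t x ∂ν) := fun s t hst => lintegral_mono (hanti hst)
  have hlm : Measurable (fun t => ∫⁻ x, h t x ∂ν) := hlanti.measurable
  have hUanti : Antitone (fun t => upperL ν (h t)) := fun s t hst => upperL_anti (hanti hst)
  have hUm : Measurable (fun t => upperL ν (h t)) := hUanti.measurable
  refine ⟨?_, hlm⟩
  have hset : {t : ℝ | AEMeasurable (h t) ν}
      = {t : ℝ | upperL ν (h t) - ∫⁻ x, h t x ∂ν = 0} := by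
    ext t
    simp only [mem_setOf_eq, tsub_eq_zero_iff_le]
    constructor
    · intro ht
      rw [upperL_eq_of_aemeasurable ht]
    · intro ht
      exact aemeasurable_of_upperL_eq (hfin t)
        (le_antisymm ht (le_upperL ν (h t)))
  rw [hset]
  exact (hUm.sub hlm) (measurableSet_singleton 0)

/-- The layer function `t ↦ ∫ (S t).indicator f₀` is integrable on `(0,1)` for an antitone
family of (arbitrary!) sets `S` and integrable `f₀`. -/
theorem integrable_layers {ν : Measure α} {f₀ : α → ℝ} (hf₀ : Integrable f₀ ν)
    {S : ℝ → Set α} (hS : ∀ ⦃s t : ℝ⦄, s ≤ t → S t ⊆ S s) :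
    IntegrableOn (fun t => ∫ x, (S t).indicator f₀ x ∂ν) (Ioo (0:ℝ) 1) := by
  classical
  set fp : α → ℝ := fun x => max (f₀ x) 0 with hfp
  set fm : α → ℝ := fun x => max (-f₀ x) 0 with hfm
  have hfp0 : ∀ x, 0 ≤ fp x := fun x => le_max_right _ _
  have hfm0 : ∀ x, 0 ≤ fm x := fun x => le_max_right _ _
  have hfple : ∀ x, fp x ≤ |f₀ x| := fun x => max_le (le_abs_self _) (abs_nonneg _)
  have hfmle : ∀ x, fm x ≤ |f₀ x| := fun x => max_le (neg_le_abs _) (abs_nonneg _)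
  set hp : ℝ → α → ℝ≥0∞ := fun t x => ENNReal.ofReal ((S t).indicator fp x) with hhp
  set hm : ℝ → α → ℝ≥0∞ := fun t x => ENNReal.ofReal ((S t).indicator fm x) with hhm
  have hC : ∫⁻ x, ‖f₀ x‖₊ ∂ν ≠ ⊤ := hf₀.2.ne
  have hple : ∀ t x, hp t x ≤ ‖f₀ x‖₊ := by
    intro t x
    rw [hhp]
    refine le_trans (ENNReal.ofReal_le_ofReal ?_) (by
      rw [← Real.enorm_eq_ofReal (abs_nonneg _), Real.enorm_abs]; exact le_rfl)
    refine le_trans (Set.indicator_le_self' (fun x _ => hfp0 x) x) (hfple x)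
  have hmle : ∀ t x, hm t x ≤ ‖f₀ x‖₊ := by
    intro t x
    rw [hhm]
    refine le_trans (ENNReal.ofReal_le_ofReal ?_) (by
      rw [← Real.enorm_eq_ofReal (abs_nonneg _), Real.enorm_abs]; exact le_rfl)
    refine le_trans (Set.indicator_le_self' (fun x _ => hfm0 x) x) (hfmle x)
  have hpfin : ∀ t, ∫⁻ x, hp t x ∂ν ≠ ⊤ :=
    fun t => (lt_of_le_of_lt (lintegral_mono (hple t)) hC.lt_top).ne
  have hmfin : ∀ t, ∫⁻ x, hm t x ∂ν ≠ ⊤ :=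
    fun t => (lt_of_le_of_lt (lintegral_mono (hmle t)) hC.lt_top).ne
  have hpanti : ∀ ⦃s t : ℝ⦄, s ≤ t → hp t ≤ hp s := by
    intro s t hst x
    exact ENNReal.ofReal_le_ofReal
      (Set.indicator_le_indicator_of_subset (hS hst) hfp0 x)
  have hmanti : ∀ ⦃s t : ℝ⦄, s ≤ t → hm t ≤ hm s := by
    intro s t hst x
    exact ENNReal.ofReal_le_ofReal
      (Set.indicator_le_indicator_of_subset (hS hst) hfm0 x)
  obtain ⟨hTp, hlp⟩ := antitone_family_measurable hpanti hpfin
  obtain ⟨hTm, hlm⟩ := antitone_family_measurable hmanti hmfin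
  set T : Set ℝ := {t | AEMeasurable (hp t) ν} ∩ {t | AEMeasurable (hm t) ν} with hT
  have hTmeas : MeasurableSet T := hTp.inter hTm
  -- pointwise identities for the indicators
  have hind_p : ∀ t x, (S t).indicator fp x = max ((S t).indicator f₀ x) 0 := by
    intro t x
    by_cases hx : x ∈ S t <;> simp [Set.indicator_of_mem, Set.indicator_of_notMem, hx, hfp]
  have hind_m : ∀ t x, (S t).indicator fm x = max (-(S t).indicator f₀ x) 0 := by
    intro t x
    by_cases hx : x ∈ S t <;> simp [Set.indicator_of_mem, Set.indicator_of_notMem, hx, hfm]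
  have hind_sub : ∀ t x, (S t).indicator f₀ x = (S t).indicator fp x - (S t).indicator fm x := by
    intro t x
    rw [hind_p, hind_m]
    rcases le_total ((S t).indicator f₀ x) 0 with h | h
    · simp [max_eq_left, h, neg_nonneg.mpr h, max_eq_right h]
    · simp [max_eq_left h, max_eq_right (neg_nonpos.mpr h)]
  -- the target function equals an explicit measurable function
  have hkey : (fun t => ∫ x, (S t).indicator f₀ x ∂ν)
      = T.indicator (fun t => (∫⁻ x, hp t x ∂ν).toReal - (∫⁻ x, hm t x ∂ν).toReal) := by
    funext t
    by_cases ht : t ∈ T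
    · rw [Set.indicator_of_mem ht]
      obtain ⟨htp, htm⟩ := ht
      have haep : AEStronglyMeasurable ((S t).indicator fp) ν := by
        have : (S t).indicator fp = fun x => (hp t x).toReal := by
          funext x
          rw [hhp]
          exact (ENNReal.toReal_ofReal (Set.indicator_nonneg (fun x _ => hfp0 x) x)).symm
        rw [this]
        exact htp.ennreal_toReal.aestronglyMeasurable
      have haem : AEStronglyMeasurable ((S t).indicator fm) ν := by
        have : (S t).indicator fm = fun x => (hm t x).toReal := by
          funext x
          rw [hhm]
          exact (ENNReal.toReal_ofReal (Set.indicator_nonneg (fun x _ => hfm0 x) x)).symm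
        rw [this]
        exact htm.ennreal_toReal.aestronglyMeasurable
      have hip : Integrable ((S t).indicator fp) ν := by
        refine Integrable.mono' hf₀.abs haep (Filter.Eventually.of_forall fun x => ?_)
        rw [Real.norm_eq_abs, abs_of_nonneg (Set.indicator_nonneg (fun x _ => hfp0 x) x)]
        exact le_trans (Set.indicator_le_self' (fun x _ => hfp0 x) x) (hfple x)
      have him : Integrable ((S t).indicator fm) ν := by
        refine Integrable.mono' hf₀.abs haem (Filter.Eventually.of_forall fun x => ?_)
        rw [Real.norm_eq_abs, abs_of_nonneg (Set.indicator_nonneg (fun x _ => hfm0 x) x)]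
        exact le_trans (Set.indicator_le_self' (fun x _ => hfm0 x) x) (hfmle x)
      have h1 : ∫ x, (S t).indicator f₀ x ∂ν
          = ∫ x, (S t).indicator fp x ∂ν - ∫ x, (S t).indicator fm x ∂ν := by
        rw [← integral_sub hip him]
        exact integral_congr_ae (Filter.Eventually.of_forall fun x => hind_sub t x)
      have h2 : ∫ x, (S t).indicator fp x ∂ν = (∫⁻ x, hp t x ∂ν).toReal := by
        rw [integral_eq_lintegral_of_nonneg_ae
          (Filter.Eventually.of_forall (Set.indicator_nonneg (fun x _ => hfp0 x))) haep]
      have h3 : ∫ x, (S t).indicator fm x ∂ν = (∫⁻ x, hm t x ∂ν).toReal := by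
        rw [integral_eq_lintegral_of_nonneg_ae
          (Filter.Eventually.of_forall (Set.indicator_nonneg (fun x _ => hfm0 x))) haem]
      rw [h1, h2, h3]
    · rw [Set.indicator_of_notMem ht]
      refine integral_undef fun hInt => ht ?_
      have haesm := hInt.1
      constructor
      · have heqp : (S t).indicator fp = fun x => max ((S t).indicator f₀ x) 0 :=
          funext (hind_p t)
        have haefp : AEStronglyMeasurable ((S t).indicator fp) ν := by
          rw [heqp]
          exact (haesm.aemeasurable.max aemeasurable_const).aestronglyMeasurable
        exact haefp.aemeasurable.ennreal_ofReal
      · have heqm : (S t).indicator fm = fun x => max (-(S t).indicator f₀ x) 0 :=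
          funext (hind_m t)
        have haefm : AEStronglyMeasurable ((S t).indicator fm) ν := by
          rw [heqm]
          exact (haesm.neg.aemeasurable.max aemeasurable_const).aestronglyMeasurable
        exact haefm.aemeasurable.ennreal_ofReal
  rw [hkey]
  have hmeas : Measurable (T.indicator
      (fun t => (∫⁻ x, hp t x ∂ν).toReal - (∫⁻ x, hm t x ∂ν).toReal)) :=
    (Measurable.sub hlp.ennreal_toReal hlm.ennreal_toReal).indicator hTmeas
  refine Integrable.mono' (g := fun _ => 2 * (∫⁻ x, ‖f₀ x‖₊ ∂ν).toReal)
    ?_ (hmeas.aestronglyMeasurable) (Filter.Eventually.of_forall fun t => ?_)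
  · refine (integrableOn_const_iff).mpr (Or.inr ?_)
    rw [Real.volume_Ioo]
    exact ENNReal.ofReal_lt_top
  · show _ ≤ 2 * (∫⁻ x, (‖f₀ x‖₊ : ℝ≥0∞) ∂ν).toReal
    by_cases ht : t ∈ T
    · rw [Set.indicator_of_mem ht, Real.norm_eq_abs]
      have hb1 : (∫⁻ x, hp t x ∂ν).toReal ≤ (∫⁻ x, ‖f₀ x‖₊ ∂ν).toReal :=
        ENNReal.toReal_mono hC (lintegral_mono (hple t))
      have hb2 : (∫⁻ x, hm t x ∂ν).toReal ≤ (∫⁻ x, ‖f₀ x‖₊ ∂ν).toReal :=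
        ENNReal.toReal_mono hC (lintegral_mono (hmle t))
      have h0p : 0 ≤ (∫⁻ x, hp t x ∂ν).toReal := ENNReal.toReal_nonneg
      have h0m : 0 ≤ (∫⁻ x, hm t x ∂ν).toReal := ENNReal.toReal_nonneg
      rw [abs_sub_le_iff]
      constructor <;> nlinarith
    · rw [Set.indicator_of_notMem ht]
      simp only [norm_zero]
      positivity

end aux

/-- If `u` minimizes `F v = ∫_Ω f v + γ |Dv|(Ω)` over `[0,1]`-valued functions, then by the
coarea and layer-cake formulas `F u = ∫_0^1 F (𝟙_{u > t}) dt`, and consequently some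
super-level indicator `𝟙_{u > t}` is also a minimizer. -/
theorem bang_bang_minimizer (Ω : Set (EuclideanSpace ℝ (Fin 3))) (hΩ : IsOpen Ω)
    (f : EuclideanSpace ℝ (Fin 3) → ℝ) (hf : IntegrableOn f Ω)
    (γ : ℝ) (hγ : 0 < γ)
    (TV : (EuclideanSpace ℝ (Fin 3) → ℝ) → ℝ)
    (F : (EuclideanSpace ℝ (Fin 3) → ℝ) → ℝ)
    (hF : ∀ v, F v = (∫ x in Ω, f x * v x) + γ * TV v)
    (u : EuclideanSpace ℝ (Fin 3) → ℝ) (hu : ∀ x, u x ∈ Icc (0:ℝ) 1)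
    -- coarea formula for the total variation
    (hcoarea : ∀ v : EuclideanSpace ℝ (Fin 3) → ℝ, (∀ x, v x ∈ Icc (0:ℝ) 1) →
      TV v = ∫ t in Ioo (0:ℝ) 1, TV (Set.indicator {y | t < v y} fun _ => 1))
    -- layer-cake formula for the linear term
    (hlayer : (∫ x in Ω, f x * u x)
        = ∫ t in Ioo (0:ℝ) 1, ∫ x in Ω, f x * Set.indicator {y | t < u y} (fun _ => 1) x)
    (hint : IntegrableOn (fun t => F (Set.indicator {y | t < u y} fun _ => 1)) (Ioo (0:ℝ) 1))
    (hmin : ∀ v, (∀ x, v x ∈ Icc (0:ℝ) 1) → F u ≤ F v) :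
    F u = (∫ t in Ioo (0:ℝ) 1, F (Set.indicator {y | t < u y} fun _ => 1)) ∧
    ∃ t ∈ Ico (0:ℝ) 1, ∀ v, (∀ x, v x ∈ Icc (0:ℝ) 1) →
        F (Set.indicator {y | t < u y} fun _ => 1) ≤ F v := by
  classical
  set S : ℝ → Set (EuclideanSpace ℝ (Fin 3)) := fun t => {y | t < u y} with hSdef
  set A : ℝ → ℝ := fun t => ∫ x in Ω, f x * Set.indicator (S t) (fun _ => 1) x with hAdef
  set B : ℝ → ℝ := fun t => TV (Set.indicator (S t) fun _ => 1) with hBdef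
  set φ : ℝ → ℝ := fun t => F (Set.indicator (S t) fun _ => 1) with hφdef
  have hS : ∀ ⦃s t : ℝ⦄, s ≤ t → S t ⊆ S s := fun s t hst y hy => lt_of_le_of_lt hst hy
  -- the inner integrand is an indicator of `f`
  have hinner : ∀ t, (fun x => f x * Set.indicator (S t) (fun _ => 1) x)
      = (S t).indicator f := by
    intro t
    funext x
    by_cases hx : x ∈ S t <;>
      simp [Set.indicator_of_mem, Set.indicator_of_notMem, hx]
  have hA_int : IntegrableOn A (Ioo (0:ℝ) 1) := by
    have := integrable_layers (ν := volume.restrict Ω) hf hS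
    refine this.congr_fun ?_ measurableSet_Ioo
    intro t _
    rw [hAdef]
    simp only
    rw [hinner t]
  have hφA : ∀ t, φ t = A t + γ * B t := fun t => hF _
  have hB_int : IntegrableOn B (Ioo (0:ℝ) 1) := by
    have h1 : IntegrableOn (fun t => (φ t - A t) / γ) (Ioo (0:ℝ) 1) :=
      (hint.sub hA_int).div_const γ
    refine h1.congr_fun ?_ measurableSet_Ioo
    intro t _
    show (φ t - A t) / γ = B t
    rw [hφA t]
    field_simp
    ring
  -- Part 1
  have hvol : (volume (Ioo (0:ℝ) 1)).toReal = 1 := by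
    rw [Real.volume_Ioo]
    norm_num
  have part1 : F u = ∫ t in Ioo (0:ℝ) 1, φ t := by
    have hsplit : ∫ t in Ioo (0:ℝ) 1, φ t
        = (∫ t in Ioo (0:ℝ) 1, A t) + γ * ∫ t in Ioo (0:ℝ) 1, B t := by
      calc ∫ t in Ioo (0:ℝ) 1, φ t = ∫ t in Ioo (0:ℝ) 1, (A t + γ * B t) :=
            integral_congr_ae (Filter.Eventually.of_forall fun t => hφA t)
        _ = (∫ t in Ioo (0:ℝ) 1, A t) + ∫ t in Ioo (0:ℝ) 1, γ * B t :=
            integral_add hA_int (hB_int.const_mul γ)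
        _ = (∫ t in Ioo (0:ℝ) 1, A t) + γ * ∫ t in Ioo (0:ℝ) 1, B t := by
            rw [integral_const_mul]
    rw [hsplit, hF u, hlayer, hcoarea u hu]
  refine ⟨part1, ?_⟩
  -- Part 2
  have hind01 : ∀ t, ∀ x, Set.indicator (S t) (fun _ => (1:ℝ)) x ∈ Icc (0:ℝ) 1 := by
    intro t x
    by_cases hx : x ∈ S t <;>
      simp [Set.indicator_of_mem, Set.indicator_of_notMem, hx]
  have hub : ∀ t, F u ≤ φ t := fun t => hmin _ (hind01 t)
  set ψ : ℝ → ℝ := fun t => φ t - F u with hψdef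
  have hψ_int : IntegrableOn ψ (Ioo (0:ℝ) 1) := by
    refine hint.sub ?_
    refine (integrableOn_const_iff).mpr (Or.inr ?_)
    rw [Real.volume_Ioo]
    exact ENNReal.ofReal_lt_top
  have hψ0 : 0 ≤ ψ := fun t => sub_nonneg.mpr (hub t)
  have hψint0 : ∫ t in Ioo (0:ℝ) 1, ψ t = 0 := by
    rw [integral_sub hint ((integrableOn_const_iff).mpr (Or.inr (by
      rw [Real.volume_Ioo]; exact ENNReal.ofReal_lt_top)))]
    rw [setIntegral_const, measureReal_def, hvol, one_smul, ← part1, sub_self]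
  have hae : ∀ᵐ t ∂(volume.restrict (Ioo (0:ℝ) 1)), ψ t = 0 := by
    have := (integral_eq_zero_iff_of_nonneg_ae
      (Filter.Eventually.of_forall fun t => hψ0 t) hψ_int).mp hψint0
    filter_upwards [this] with t ht using ht
  have hne : volume.restrict (Ioo (0:ℝ) 1) ≠ 0 := by
    intro h
    have : volume (Ioo (0:ℝ) 1) = 0 := by
      rw [← Measure.restrict_apply_univ, h]
      simp
    rw [Real.volume_Ioo] at this
    norm_num at this
  have hexists : ∃ t, t ∈ Ioo (0:ℝ) 1 ∧ ψ t = 0 := by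
    have hmem : ∀ᵐ t ∂(volume.restrict (Ioo (0:ℝ) 1)), t ∈ Ioo (0:ℝ) 1 :=
      ae_restrict_mem measurableSet_Ioo
    have : ∀ᵐ t ∂(volume.restrict (Ioo (0:ℝ) 1)), t ∈ Ioo (0:ℝ) 1 ∧ ψ t = 0 :=
      hmem.and hae
    haveI hNB : (ae (volume.restrict (Ioo (0:ℝ) 1))).NeBot := ae_neBot.mpr hne
    exact this.exists
  obtain ⟨t, htmem, htψ⟩ := hexists
  refine ⟨t, ⟨htmem.1.le, htmem.2⟩, fun v hv => ?_⟩
  have : φ t = F u := by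
    have := sub_eq_zero.mp htψ
    linarith [htψ]
  calc F (Set.indicator (S t) fun _ => 1) = φ t := rfl
    _ = F u := this
    _ ≤ F v := hmin v hv
end

section
/- Let E : A → [0,∞) be a functional on a class A of finite ℝ^N-valued measures, and suppose E has the approximate-superposition property: for all ρ₁, ρ₂ ∈ A and all δ > 0 there exists ρ ∈ A with ρ(ℝ³) = ρ₁(ℝ³) + ρ₂(ℝ³) and E(ρ) ≤ E(ρ₁) + E(ρ₂) + δ. Then the function φ(ξ) = inf { liminf_k E(ρ_k)/z_k : ρ_k ∈ A, z_k > 0, ρ_k(ℝ³)/z_k → ξ } is subadditive: φ(ξ₁ + ξ₂) ≤ φ(ξ₁) + φ(ξ₂) for all ξ₁, ξ₂ ∈ ℝ^N. -/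
open Filter
open scoped ENNReal

section
variable {N : ℕ} {ι : Type*} (mass : ι → (Fin N → ℝ)) (E : ι → ℝ)

lemma copies_superpose
    (hsuper : ∀ ρ₁ ρ₂ : ι, ∀ δ : ℝ, 0 < δ →
      ∃ ρ : ι, mass ρ = mass ρ₁ + mass ρ₂ ∧ E ρ ≤ E ρ₁ + E ρ₂ + δ) :
    ∀ (n : ℕ) (ρ₀ : ι) (δ : ℝ), 0 < δ →
      ∃ ρ, mass ρ = (n + 1) • mass ρ₀ ∧ E ρ ≤ (n + 1 : ℝ) * E ρ₀ + δ := by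
  intro n
  induction n with
  | zero => intro ρ₀ δ hδ; exact ⟨ρ₀, by simp, by simp; linarith⟩
  | succ n ih =>
    intro ρ₀ δ hδ
    obtain ⟨ρ', hm', hE'⟩ := ih ρ₀ (δ/2) (by linarith)
    obtain ⟨ρ, hm, hEρ⟩ := hsuper ρ' ρ₀ (δ/2) (by linarith)
    refine ⟨ρ, ?_, ?_⟩
    · rw [hm, hm']; rw [succ_nsmul, succ_nsmul, succ_nsmul]
    · push_cast
      calc E ρ ≤ E ρ' + E ρ₀ + δ/2 := hEρ
        _ ≤ ((n + 1 : ℝ) * E ρ₀ + δ/2) + E ρ₀ + δ/2 := by linarith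
        _ = (n + 1 + 1 : ℝ) * E ρ₀ + δ := by ring

lemma pair_superpose
    (hsuper : ∀ ρ₁ ρ₂ : ι, ∀ δ : ℝ, 0 < δ →
      ∃ ρ : ι, mass ρ = mass ρ₁ + mass ρ₂ ∧ E ρ ≤ E ρ₁ + E ρ₂ + δ) :
    ∀ (a b : ℕ), 0 < a → 0 < b → ∀ (ρ₁ ρ₂ : ι) (δ : ℝ), 0 < δ →
      ∃ ρ, mass ρ = a • mass ρ₁ + b • mass ρ₂ ∧
        E ρ ≤ (a : ℝ) * E ρ₁ + (b : ℝ) * E ρ₂ + δ := by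
  intro a b ha hb ρ₁ ρ₂ δ hδ
  obtain ⟨a', rfl⟩ : ∃ a', a = a' + 1 := ⟨a - 1, by omega⟩
  obtain ⟨b', rfl⟩ : ∃ b', b = b' + 1 := ⟨b - 1, by omega⟩
  obtain ⟨σ₁, hm₁, hE₁⟩ := copies_superpose mass E hsuper a' ρ₁ (δ/3) (by linarith)
  obtain ⟨σ₂, hm₂, hE₂⟩ := copies_superpose mass E hsuper b' ρ₂ (δ/3) (by linarith)
  obtain ⟨ρ, hm, hEρ⟩ := hsuper σ₁ σ₂ (δ/3) (by linarith)
  refine ⟨ρ, by rw [hm, hm₁, hm₂], ?_⟩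
  push_cast
  calc E ρ ≤ E σ₁ + E σ₂ + δ/3 := hEρ
    _ ≤ ((a' + 1 : ℝ) * E ρ₁ + δ/3) + ((b' + 1 : ℝ) * E ρ₂ + δ/3) + δ/3 := by
        linarith
    _ = (a' + 1 : ℝ) * E ρ₁ + (b' + 1 : ℝ) * E ρ₂ + δ := by ring

lemma liminf_subseq' (f : ℕ → ℝ≥0∞) (hL : atTop.liminf f ≠ ⊤) :
    ∃ σ : ℕ → ℕ, StrictMono σ ∧ Tendsto (f ∘ σ) atTop (nhds (atTop.liminf f)) := by
  set L := atTop.liminf f with hLdef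
  have hfreq : ∀ n : ℕ, ∃ᶠ k in atTop, f k < L + ((n : ℝ≥0∞) + 1)⁻¹ := by
    intro n
    exact frequently_lt_of_liminf_lt (by isBoundedDefault)
      (ENNReal.lt_add_right hL (by simp : ((n : ℝ≥0∞) + 1)⁻¹ ≠ 0))
  obtain ⟨σ, hσ, hP⟩ := extraction_forall_of_frequently hfreq
  refine ⟨σ, hσ, ?_⟩
  rw [tendsto_order]
  constructor
  · intro a ha
    exact (hσ.tendsto_atTop.eventually (eventually_lt_of_lt_liminf ha))
  · intro b hb
    have htend : Tendsto (fun n : ℕ => L + ((n : ℝ≥0∞) + 1)⁻¹) atTop (nhds L) := by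
      have h0 : Tendsto (fun n : ℕ => ((n : ℝ≥0∞) + 1)⁻¹) atTop (nhds 0) := by
        have := ENNReal.tendsto_inv_nat_nhds_zero.comp (tendsto_add_atTop_nat 1)
        exact this.congr fun n => by simp [Function.comp, Nat.cast_add]
      simpa using (tendsto_const_nhds.add h0)
    filter_upwards [htend.eventually (eventually_lt_nhds hb)] with n hn
    exact lt_trans (hP n) hn

lemma ratio_identity (A B e₁ e₂ c s t d : ℝ) (hc : c ≠ 0) (hs : s ≠ 0) (ht : t ≠ 0)
    (hd : d ≠ 0) :
    (A * e₁ + B * e₂ + (c * s * t) / d) / (c * s * t) =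
      (A / (c * t)) * (e₁ / s) + (B / (c * s)) * (e₂ / t) + 1 / d := by
  field_simp

lemma core_construction (hE : ∀ ρ, 0 ≤ E ρ)
    (hsuper : ∀ ρ₁ ρ₂ : ι, ∀ δ : ℝ, 0 < δ →
      ∃ ρ : ι, mass ρ = mass ρ₁ + mass ρ₂ ∧ E ρ ≤ E ρ₁ + E ρ₂ + δ)
    {ξ₁ ξ₂ : Fin N → ℝ} (ρ₁ ρ₂ : ℕ → ι) (z₁ z₂ : ℕ → ℝ)
    (hz₁ : ∀ k, 0 < z₁ k) (hz₂ : ∀ k, 0 < z₂ k)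
    (hmt₁ : Tendsto (fun k => (z₁ k)⁻¹ • mass (ρ₁ k)) atTop (nhds ξ₁))
    (hmt₂ : Tendsto (fun k => (z₂ k)⁻¹ • mass (ρ₂ k)) atTop (nhds ξ₂))
    {L₁ L₂ : ℝ≥0∞}
    (hL₁ : L₁ = atTop.liminf fun k => ENNReal.ofReal (E (ρ₁ k) / z₁ k))
    (hL₂ : L₂ = atTop.liminf fun k => ENNReal.ofReal (E (ρ₂ k) / z₂ k))
    (h₁ : L₁ ≠ ⊤) (h₂ : L₂ ≠ ⊤) :
    ∃ (ρ : ℕ → ι) (Z : ℕ → ℝ), (∀ k, 0 < Z k) ∧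
      Tendsto (fun k => (Z k)⁻¹ • mass (ρ k)) atTop (nhds (ξ₁ + ξ₂)) ∧
      (atTop.liminf fun k => ENNReal.ofReal (E (ρ k) / Z k)) ≤ L₁ + L₂ := by
  obtain ⟨σ, hσ, hfσ⟩ := liminf_subseq' _ (hL₁ ▸ h₁)
  obtain ⟨τ, hτ, hfτ⟩ := liminf_subseq' _ (hL₂ ▸ h₂)
  rw [← hL₁] at hfσ
  rw [← hL₂] at hfτ
  set s : ℕ → ℝ := fun k => z₁ (σ k) with hs_def
  set t : ℕ → ℝ := fun k => z₂ (τ k) with ht_def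
  have hs : ∀ k, 0 < s k := fun k => hz₁ _
  have ht : ∀ k, 0 < t k := fun k => hz₂ _
  set c : ℕ → ℝ := fun k => ((k : ℝ) + 1) / min (s k) (t k) with hc_def
  have hc : ∀ k, 0 < c k := fun k => by
    apply div_pos (by positivity) (lt_min (hs k) (ht k))
  set a : ℕ → ℕ := fun k => ⌈c k * t k⌉₊ with ha_def
  set b : ℕ → ℕ := fun k => ⌈c k * s k⌉₊ with hb_def
  set Z : ℕ → ℝ := fun k => c k * s k * t k with hZ_def
  have hZ : ∀ k, 0 < Z k := fun k => by
    have := hc k; have := hs k; have := ht k; positivity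
  have hct : ∀ k : ℕ, (k : ℝ) + 1 ≤ c k * t k := by
    intro k
    have hmin : min (s k) (t k) ≤ t k := min_le_right _ _
    have hminpos : 0 < min (s k) (t k) := lt_min (hs k) (ht k)
    calc (k : ℝ) + 1 = ((k : ℝ) + 1) * 1 := by ring
      _ ≤ ((k : ℝ) + 1) * (t k / min (s k) (t k)) := by
          apply mul_le_mul_of_nonneg_left _ (by positivity)
          rw [le_div_iff₀ hminpos]; simpa using hmin
      _ = c k * t k := by simp only [hc_def]; field_simp
  have hcs : ∀ k : ℕ, (k : ℝ) + 1 ≤ c k * s k := by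
    intro k
    have hmin : min (s k) (t k) ≤ s k := min_le_left _ _
    have hminpos : 0 < min (s k) (t k) := lt_min (hs k) (ht k)
    calc (k : ℝ) + 1 = ((k : ℝ) + 1) * 1 := by ring
      _ ≤ ((k : ℝ) + 1) * (s k / min (s k) (t k)) := by
          apply mul_le_mul_of_nonneg_left _ (by positivity)
          rw [le_div_iff₀ hminpos]; simpa using hmin
      _ = c k * s k := by simp only [hc_def]; field_simp
  have hctpos : ∀ k, 0 < c k * t k := fun k => lt_of_lt_of_le (by positivity) (hct k)
  have hcspos : ∀ k, 0 < c k * s k := fun k => lt_of_lt_of_le (by positivity) (hcs k)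
  have ha : ∀ k, 0 < a k := fun k => Nat.ceil_pos.mpr (hctpos k)
  have hb : ∀ k, 0 < b k := fun k => Nat.ceil_pos.mpr (hcspos k)
  have hex : ∀ k, ∃ ρ, mass ρ = a k • mass (ρ₁ (σ k)) + b k • mass (ρ₂ (τ k)) ∧
      E ρ ≤ (a k : ℝ) * E (ρ₁ (σ k)) + (b k : ℝ) * E (ρ₂ (τ k)) + Z k / ((k : ℝ) + 1) := by
    intro k
    exact pair_superpose mass E hsuper (a k) (b k) (ha k) (hb k) _ _ _
      (div_pos (hZ k) (by positivity))
  choose ρc hmass hEn using hex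
  set r₁ : ℕ → ℝ := fun k => (a k : ℝ) / (c k * t k) with hr₁_def
  set r₂ : ℕ → ℝ := fun k => (b k : ℝ) / (c k * s k) with hr₂_def
  -- ratio bounds
  have hr₁lb : ∀ k, 1 ≤ r₁ k := fun k =>
    (one_le_div (hctpos k)).mpr (Nat.le_ceil _)
  have hr₂lb : ∀ k, 1 ≤ r₂ k := fun k =>
    (one_le_div (hcspos k)).mpr (Nat.le_ceil _)
  have hr₁ub : ∀ k, r₁ k ≤ 1 + 1 / ((k : ℝ) + 1) := by
    intro k
    have h1 : (a k : ℝ) ≤ c k * t k + 1 :=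
      le_of_lt (Nat.ceil_lt_add_one (le_of_lt (hctpos k)))
    have h2 : r₁ k ≤ (c k * t k + 1) / (c k * t k) := by
      simp only [hr₁_def]; gcongr
      exact (hctpos k).le
    rw [add_div, div_self (ne_of_gt (hctpos k))] at h2
    refine h2.trans (add_le_add_right ?_ 1)
    exact one_div_le_one_div_of_le (by positivity) (hct k)
  have hr₂ub : ∀ k, r₂ k ≤ 1 + 1 / ((k : ℝ) + 1) := by
    intro k
    have h1 : (b k : ℝ) ≤ c k * s k + 1 :=
      le_of_lt (Nat.ceil_lt_add_one (le_of_lt (hcspos k)))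
    have h2 : r₂ k ≤ (c k * s k + 1) / (c k * s k) := by
      simp only [hr₂_def]; gcongr
      exact (hcspos k).le
    rw [add_div, div_self (ne_of_gt (hcspos k))] at h2
    refine h2.trans (add_le_add_right ?_ 1)
    exact one_div_le_one_div_of_le (by positivity) (hcs k)
  have hub_tend : Tendsto (fun k : ℕ => 1 + 1 / ((k : ℝ) + 1)) atTop (nhds 1) := by
    have := tendsto_one_div_add_atTop_nhds_zero_nat (𝕜 := ℝ)
    simpa using (tendsto_const_nhds (x := (1:ℝ))).add this
  have hr₁t : Tendsto r₁ atTop (nhds 1) :=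
    tendsto_of_tendsto_of_tendsto_of_le_of_le tendsto_const_nhds hub_tend hr₁lb hr₁ub
  have hr₂t : Tendsto r₂ atTop (nhds 1) :=
    tendsto_of_tendsto_of_tendsto_of_le_of_le tendsto_const_nhds hub_tend hr₂lb hr₂ub
  -- mass identity
  have hmkey : ∀ k, (Z k)⁻¹ • mass (ρc k) =
      r₁ k • ((s k)⁻¹ • mass (ρ₁ (σ k))) + r₂ k • ((t k)⁻¹ • mass (ρ₂ (τ k))) := by
    intro k
    rw [hmass k, ← Nat.cast_smul_eq_nsmul ℝ (a k), ← Nat.cast_smul_eq_nsmul ℝ (b k),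
      smul_add, smul_smul, smul_smul, smul_smul, smul_smul]
    congr 1
    · congr 1
      simp only [hr₁_def, hZ_def, div_eq_mul_inv, mul_inv]
      ring
    · congr 1
      simp only [hr₂_def, hZ_def, div_eq_mul_inv, mul_inv]
      ring
  have hmassT : Tendsto (fun k => (Z k)⁻¹ • mass (ρc k)) atTop (nhds (ξ₁ + ξ₂)) := by
    have h1 : Tendsto (fun k => (s k)⁻¹ • mass (ρ₁ (σ k))) atTop (nhds ξ₁) :=
      hmt₁.comp hσ.tendsto_atTop
    have h2 : Tendsto (fun k => (t k)⁻¹ • mass (ρ₂ (τ k))) atTop (nhds ξ₂) :=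
      hmt₂.comp hτ.tendsto_atTop
    have := (hr₁t.smul h1).add (hr₂t.smul h2)
    simp only [one_smul] at this
    exact Tendsto.congr (fun k => (hmkey k).symm) this
  -- energy
  set u₁ : ℕ → ℝ := fun k => E (ρ₁ (σ k)) / s k with hu₁_def
  set u₂ : ℕ → ℝ := fun k => E (ρ₂ (τ k)) / t k with hu₂_def
  have hu₁nn : ∀ k, 0 ≤ u₁ k := fun k => div_nonneg (hE _) (le_of_lt (hs k))
  have hu₂nn : ∀ k, 0 ≤ u₂ k := fun k => div_nonneg (hE _) (le_of_lt (ht k))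
  have hu₁t : Tendsto u₁ atTop (nhds L₁.toReal) := by
    have h := (ENNReal.tendsto_toReal h₁).comp hfσ
    exact h.congr fun k => ENNReal.toReal_ofReal (hu₁nn k)
  have hu₂t : Tendsto u₂ atTop (nhds L₂.toReal) := by
    have h := (ENNReal.tendsto_toReal h₂).comp hfτ
    exact h.congr fun k => ENNReal.toReal_ofReal (hu₂nn k)
  set g : ℕ → ℝ := fun k => r₁ k * u₁ k + r₂ k * u₂ k + 1 / ((k : ℝ) + 1) with hg_def
  have hgt : Tendsto g atTop (nhds (L₁.toReal + L₂.toReal)) := by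
    have h := ((hr₁t.mul hu₁t).add (hr₂t.mul hu₂t)).add
      tendsto_one_div_add_atTop_nhds_zero_nat
    simp only [one_mul, add_zero] at h
    exact h
  have hEb : ∀ k, E (ρc k) / Z k ≤ g k := by
    intro k
    have h1 : E (ρc k) / Z k ≤
        ((a k : ℝ) * E (ρ₁ (σ k)) + (b k : ℝ) * E (ρ₂ (τ k)) + Z k / ((k : ℝ) + 1)) / Z k := by
      gcongr
      · exact le_of_lt (hZ k)
      · exact hEn k
    refine h1.trans_eq ?_
    simp only [hg_def, hr₁_def, hr₂_def, hu₁_def, hu₂_def, hZ_def]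
    exact ratio_identity _ _ _ _ _ _ _ _ (ne_of_gt (hc k)) (ne_of_gt (hs k))
      (ne_of_gt (ht k)) (by positivity)
  refine ⟨ρc, Z, hZ, hmassT, ?_⟩
  have hgof : Tendsto (fun k => ENNReal.ofReal (g k)) atTop (nhds (L₁ + L₂)) := by
    have h := (ENNReal.continuous_ofReal.tendsto _).comp hgt
    rw [ENNReal.ofReal_add ENNReal.toReal_nonneg ENNReal.toReal_nonneg,
      ENNReal.ofReal_toReal h₁, ENNReal.ofReal_toReal h₂] at h
    exact h
  calc (atTop.liminf fun k => ENNReal.ofReal (E (ρc k) / Z k))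
      ≤ atTop.liminf fun k => ENNReal.ofReal (g k) :=
        liminf_le_liminf (Eventually.of_forall fun k => ENNReal.ofReal_le_ofReal (hEb k))
    _ = L₁ + L₂ := hgof.liminf_eq

end

/-- If the energy `E` has the approximate-superposition property (two admissible measures can
be combined with total mass adding up and energy almost adding up), then the cell-formula
density `φ` is subadditive. -/
theorem cell_energy_subadditive {N : ℕ} {ι : Type*}
    (mass : ι → (Fin N → ℝ)) (E : ι → ℝ) (hE : ∀ ρ, 0 ≤ E ρ)
    (hsuper : ∀ ρ₁ ρ₂ : ι, ∀ δ : ℝ, 0 < δ →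
      ∃ ρ : ι, mass ρ = mass ρ₁ + mass ρ₂ ∧ E ρ ≤ E ρ₁ + E ρ₂ + δ)
    (φ : (Fin N → ℝ) → ℝ≥0∞)
    (hφ : ∀ ξ, φ ξ = sInf {L : ℝ≥0∞ | ∃ ρ : ℕ → ι, ∃ z : ℕ → ℝ, (∀ k, 0 < z k) ∧
        Tendsto (fun k => (z k)⁻¹ • mass (ρ k)) atTop (nhds ξ) ∧
        L = Filter.atTop.liminf fun k => ENNReal.ofReal (E (ρ k) / z k)}) :
    ∀ ξ₁ ξ₂ : Fin N → ℝ, φ (ξ₁ + ξ₂) ≤ φ ξ₁ + φ ξ₂ := by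
  intro ξ₁ ξ₂
  apply ENNReal.le_of_forall_pos_le_add
  intro ε hε hlt
  have hφ₁top : φ ξ₁ ≠ ⊤ := fun h => by simp [h] at hlt
  have hφ₂top : φ ξ₂ ≠ ⊤ := fun h => by simp [h] at hlt
  have hε2 : ((ε : ℝ≥0∞) / 2) ≠ 0 := by
    simp [ENNReal.div_eq_zero_iff, hε.ne']
  have h1 : φ ξ₁ < φ ξ₁ + (ε : ℝ≥0∞) / 2 := ENNReal.lt_add_right hφ₁top hε2
  have h2 : φ ξ₂ < φ ξ₂ + (ε : ℝ≥0∞) / 2 := ENNReal.lt_add_right hφ₂top hε2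
  rw [hφ ξ₁] at h1
  rw [hφ ξ₂] at h2
  obtain ⟨L₁, hL₁mem, hL₁lt⟩ := sInf_lt_iff.mp h1
  obtain ⟨L₂, hL₂mem, hL₂lt⟩ := sInf_lt_iff.mp h2
  have hdiv : ((ε : ℝ≥0∞) / 2) < ⊤ := ENNReal.div_lt_top ENNReal.coe_ne_top (by norm_num)
  have hL₁top : L₁ ≠ ⊤ := by
    apply LT.lt.ne
    calc L₁ < _ := hL₁lt
      _ < ⊤ := ENNReal.add_lt_top.mpr ⟨by rw [← hφ ξ₁]; exact hφ₁top.lt_top, hdiv⟩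
  have hL₂top : L₂ ≠ ⊤ := by
    apply LT.lt.ne
    calc L₂ < _ := hL₂lt
      _ < ⊤ := ENNReal.add_lt_top.mpr ⟨by rw [← hφ ξ₂]; exact hφ₂top.lt_top, hdiv⟩
  obtain ⟨ρ₁s, z₁s, hz₁, hmt₁, hLeq₁⟩ := hL₁mem
  obtain ⟨ρ₂s, z₂s, hz₂, hmt₂, hLeq₂⟩ := hL₂mem
  obtain ⟨ρ, Z, hZp, hmT, hliminf⟩ := core_construction mass E hE hsuper ρ₁s ρ₂s z₁s z₂s
    hz₁ hz₂ hmt₁ hmt₂ hLeq₁ hLeq₂ hL₁top hL₂top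
  have hmem : (Filter.atTop.liminf fun k => ENNReal.ofReal (E (ρ k) / Z k)) ∈
      {L : ℝ≥0∞ | ∃ ρ : ℕ → ι, ∃ z : ℕ → ℝ, (∀ k, 0 < z k) ∧
        Tendsto (fun k => (z k)⁻¹ • mass (ρ k)) atTop (nhds (ξ₁ + ξ₂)) ∧
        L = Filter.atTop.liminf fun k => ENNReal.ofReal (E (ρ k) / z k)} :=
    ⟨ρ, Z, hZp, hmT, rfl⟩
  calc φ (ξ₁ + ξ₂) ≤ Filter.atTop.liminf fun k => ENNReal.ofReal (E (ρ k) / Z k) := by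
        rw [hφ (ξ₁ + ξ₂)]; exact sInf_le hmem
    _ ≤ L₁ + L₂ := hliminf
    _ ≤ (φ ξ₁ + (ε : ℝ≥0∞) / 2) + (φ ξ₂ + (ε : ℝ≥0∞) / 2) := by
        rw [hφ ξ₁, hφ ξ₂]
        exact add_le_add hL₁lt.le hL₂lt.le
    _ = (φ ξ₁ + φ ξ₂) + ((ε : ℝ≥0∞) / 2 + (ε : ℝ≥0∞) / 2) := by ring
    _ = φ ξ₁ + φ ξ₂ + ε := by rw [ENNReal.add_halves]
end

section
/- Let M ∈ ℕ, and let x_1, …, x_M be distinct points in ℝ³. For every δ > 0 there exists a translation z ∈ [0,δ)³ of the standard partition of ℝ³ into half-open cubes of side length δ (cubes Q_{k+z,δ} = z + δk + [−δ/2,δ/2)³, k ∈ δℤ³) such that Σ over pairs (i,j) with x_i, x_j lying in different cubes of 1/|x_i − x_j| is at most 4M²/δ. -/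
open Set MeasureTheory
open scoped ENNReal


lemma floor_sub_ne_iff (y L : ℝ) (hL : 0 ≤ L) : ⌊y - L⌋ ≠ ⌊y⌋ ↔ Int.fract y < L := by
  have hf : Int.fract y = y - ↑⌊y⌋ := rfl
  have h1 := Int.lt_floor_add_one y
  have h2 := Int.floor_le y
  constructor
  · intro hne
    by_contra hge
    push_neg at hge
    exact hne (Int.floor_eq_iff.mpr ⟨by push_cast; linarith, by push_cast; linarith⟩)
  · intro hlt heq
    have h3 := (Int.floor_eq_iff.mp heq).1
    linarith

lemma fract_cut_subset (c L δ : ℝ) (hδ : 0 < δ) :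
    {s : ℝ | s ∈ Ico (0:ℝ) δ ∧ Int.fract (c - s/δ) < L} ⊆
      Icc (max (δ*(Int.fract c - L)) 0) (δ * Int.fract c) ∪ Icc (δ*(Int.fract c + 1 - L)) δ := by
  rintro s ⟨⟨hs0, hsδ⟩, hcut⟩
  set γ := Int.fract c with hγ
  have hγ0 : 0 ≤ γ := Int.fract_nonneg c
  have hγ1 : γ < 1 := Int.fract_lt_one c
  have hfc : (⌊c⌋:ℝ) = c - γ := by
    have h : γ = c - ↑⌊c⌋ := rfl
    linarith
  have ht0 : 0 ≤ s/δ := div_nonneg hs0 hδ.le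
  have ht1 : s/δ < 1 := (div_lt_one hδ).mpr hsδ
  have hcfloor := Int.lt_floor_add_one c
  by_cases h : s/δ ≤ γ
  · left
    have hfloor : ⌊c - s/δ⌋ = ⌊c⌋ :=
      Int.floor_eq_iff.mpr ⟨by push_cast; linarith, by push_cast; linarith⟩
    have hfr : Int.fract (c - s/δ) = γ - s/δ := by
      have : Int.fract (c - s/δ) = c - s/δ - ↑⌊c - s/δ⌋ := rfl
      rw [this, hfloor, hfc]; ring
    rw [hfr] at hcut
    refine ⟨max_le ?_ hs0, ?_⟩
    · have : γ - L < s/δ := by linarith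
      exact ((lt_div_iff₀' hδ).mp this).le
    · calc s = δ * (s/δ) := by field_simp
        _ ≤ δ * γ := by nlinarith
  · right
    push_neg at h
    have hfloor : ⌊c - s/δ⌋ = ⌊c⌋ - 1 :=
      Int.floor_eq_iff.mpr ⟨by push_cast; linarith, by push_cast; linarith⟩
    have hfr : Int.fract (c - s/δ) = γ + 1 - s/δ := by
      have : Int.fract (c - s/δ) = c - s/δ - ↑⌊c - s/δ⌋ := rfl
      rw [this, hfloor]; push_cast; rw [hfc]; ring
    rw [hfr] at hcut
    refine ⟨?_, hsδ.le⟩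
    have : γ + 1 - L < s/δ := by linarith
    exact ((lt_div_iff₀' hδ).mp this).le

lemma cut_volume_le_aux (a b δ : ℝ) (hδ : 0 < δ) (hab : a ≤ b) :
    volume {s : ℝ | s ∈ Ico (0:ℝ) δ ∧ ⌊(a - s)/δ + 1/2⌋ ≠ ⌊(b - s)/δ + 1/2⌋}
      ≤ ENNReal.ofReal (b - a) := by
  set c := b/δ + 1/2 with hc
  set L := (b - a)/δ with hLdef
  have hδ' : δ ≠ 0 := hδ.ne'
  have hL : 0 ≤ L := div_nonneg (by linarith) hδ.le
  have hset : {s : ℝ | s ∈ Ico (0:ℝ) δ ∧ ⌊(a - s)/δ + 1/2⌋ ≠ ⌊(b - s)/δ + 1/2⌋}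
      = {s : ℝ | s ∈ Ico (0:ℝ) δ ∧ Int.fract (c - s/δ) < L} := by
    ext s
    have e1 : (a - s)/δ + 1/2 = (c - s/δ) - L := by rw [hc, hLdef]; field_simp; ring
    have e2 : (b - s)/δ + 1/2 = c - s/δ := by rw [hc]; field_simp; ring
    simp only [mem_setOf_eq, e1, e2]
    exact and_congr_right fun _ => floor_sub_ne_iff _ _ hL
  rw [hset]
  refine le_trans (measure_mono (fract_cut_subset c L δ hδ)) ?_
  refine le_trans (measure_union_le _ _) ?_
  rw [Real.volume_Icc, Real.volume_Icc]
  set γ := Int.fract c with hγ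
  have hγ0 : 0 ≤ γ := Int.fract_nonneg c
  have hba : b - a = δ * L := by rw [hLdef]; field_simp
  rcases le_or_gt L γ with hcase | hcase
  · have hmax : max (δ*(γ - L)) 0 = δ*(γ - L) := max_eq_left (by nlinarith)
    have h2 : δ - δ*(γ + 1 - L) ≤ 0 := by nlinarith
    rw [hmax, ENNReal.ofReal_eq_zero.mpr h2, add_zero, hba]
    exact ENNReal.ofReal_le_ofReal (le_of_eq (by ring))
  · have hmax : max (δ*(γ - L)) 0 = 0 := max_eq_right (by nlinarith)
    rw [hmax, sub_zero, ← ENNReal.ofReal_add (by positivity) (by nlinarith), hba]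
    exact ENNReal.ofReal_le_ofReal (le_of_eq (by ring))

lemma cut_volume_le (a b δ : ℝ) (hδ : 0 < δ) :
    volume {s : ℝ | s ∈ Ico (0:ℝ) δ ∧ ⌊(a - s)/δ + 1/2⌋ ≠ ⌊(b - s)/δ + 1/2⌋}
      ≤ ENNReal.ofReal |a - b| := by
  rcases le_total a b with hab | hab
  · rw [abs_of_nonpos (by linarith), neg_sub]
    exact cut_volume_le_aux a b δ hδ hab
  · rw [abs_of_nonneg (by linarith)]
    have hswap : {s : ℝ | s ∈ Ico (0:ℝ) δ ∧ ⌊(a - s)/δ + 1/2⌋ ≠ ⌊(b - s)/δ + 1/2⌋}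
        = {s : ℝ | s ∈ Ico (0:ℝ) δ ∧ ⌊(b - s)/δ + 1/2⌋ ≠ ⌊(a - s)/δ + 1/2⌋} := by
      ext s; simp [ne_comm]
    rw [hswap]
    exact cut_volume_le_aux b a δ hδ hab

lemma exists_offset_1d {M : ℕ} (a : Fin M → ℝ) (w : Fin M → Fin M → ℝ)
    (hw : ∀ i j, 0 ≤ w i j) (hww : ∀ i j, w i j * |a i - a j| ≤ 1)
    (δ : ℝ) (hδ : 0 < δ) :
    ∃ s ∈ Ico (0:ℝ) δ,
      (∑ i, ∑ j, if ⌊(a i - s) / δ + 1/2⌋ ≠ ⌊(a j - s) / δ + 1/2⌋ then w i j else 0)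
        ≤ ((M:ℝ)^2 + 1) / δ := by
  classical
  set A : Fin M → Fin M → Set ℝ :=
    fun i j => {s : ℝ | ⌊(a i - s) / δ + 1/2⌋ ≠ ⌊(a j - s) / δ + 1/2⌋} with hA_def
  have hmeas : ∀ t : ℝ, Measurable fun s : ℝ => ⌊(t - s)/δ + 1/2⌋ := fun t =>
    (((measurable_const.sub measurable_id).div_const δ).add_const _).floor
  have hA : ∀ i j, MeasurableSet (A i j) := fun i j =>
    (measurableSet_eq_fun (hmeas (a i)) (hmeas (a j))).compl
  set G : ℝ → ℝ≥0∞ :=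
    fun s => ∑ i, ∑ j, (A i j).indicator (fun _ => ENNReal.ofReal (w i j)) s with hG_def
  -- integral bound
  have hint : ∫⁻ s in Ico (0:ℝ) δ, G s ≤ ((M:ℝ≥0∞) * M) := by
    rw [hG_def]
    rw [lintegral_finset_sum _ (fun i _ =>
      Finset.measurable_sum _ (fun j _ => measurable_const.indicator (hA i j)))]
    calc (∑ i, ∫⁻ s in Ico (0:ℝ) δ, ∑ j, (A i j).indicator (fun _ => ENNReal.ofReal (w i j)) s)
        ≤ ∑ i : Fin M, ∑ j : Fin M, (1 : ℝ≥0∞) := by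
          refine Finset.sum_le_sum fun i _ => ?_
          rw [lintegral_finset_sum _ (fun j _ => measurable_const.indicator (hA i j))]
          refine Finset.sum_le_sum fun j _ => ?_
          rw [lintegral_indicator (hA i j), setLIntegral_const, Measure.restrict_apply (hA i j)]
          calc ENNReal.ofReal (w i j) * volume (A i j ∩ Ico 0 δ)
              ≤ ENNReal.ofReal (w i j) * ENNReal.ofReal |a i - a j| := by
                gcongr
                refine le_trans (le_of_eq ?_) (cut_volume_le (a i) (a j) δ hδ)
                congr 1
                ext s
                simp only [hA_def, mem_inter_iff, mem_setOf_eq]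
                tauto
            _ = ENNReal.ofReal (w i j * |a i - a j|) := (ENNReal.ofReal_mul (hw i j)).symm
            _ ≤ ENNReal.ofReal 1 := ENNReal.ofReal_le_ofReal (hww i j)
            _ = 1 := ENNReal.ofReal_one
      _ = (M:ℝ≥0∞) * M := by
          simp [Finset.sum_const, Finset.card_univ, mul_one, nsmul_eq_mul, mul_comm]
  -- existence by Chebyshev
  have hexists : ∃ s ∈ Ico (0:ℝ) δ, G s ≤ ENNReal.ofReal (((M:ℝ)^2 + 1) / δ) := by
    by_contra hcon
    push_neg at hcon
    have hlow : ENNReal.ofReal (((M:ℝ)^2 + 1) / δ) * volume (Ico (0:ℝ) δ)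
        ≤ ∫⁻ s in Ico (0:ℝ) δ, G s := by
      rw [← setLIntegral_const]
      exact setLIntegral_mono' measurableSet_Ico fun s hs => (hcon s hs).le
    rw [Real.volume_Ico, sub_zero,
      ← ENNReal.ofReal_mul (by positivity), div_mul_cancel₀ _ hδ.ne'] at hlow
    have hchain := le_trans hlow hint
    have hcast : ((M:ℝ≥0∞) * M) = ENNReal.ofReal ((M:ℝ)^2) := by
      rw [ENNReal.ofReal_pow (by positivity), ENNReal.ofReal_natCast, sq]
    rw [hcast] at hchain
    have := (ENNReal.ofReal_le_ofReal_iff (by positivity)).mp hchain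
    nlinarith
  obtain ⟨s, hs, hGs⟩ := hexists
  refine ⟨s, hs, ?_⟩
  have hG_eq : G s = ENNReal.ofReal
      (∑ i, ∑ j, if ⌊(a i - s) / δ + 1/2⌋ ≠ ⌊(a j - s) / δ + 1/2⌋ then w i j else 0) := by
    rw [hG_def, ENNReal.ofReal_sum_of_nonneg (fun i _ => Finset.sum_nonneg fun j _ => by
      split <;> simp [hw i j])]
    refine Finset.sum_congr rfl fun i _ => ?_
    rw [ENNReal.ofReal_sum_of_nonneg (fun j _ => by split <;> simp [hw i j])]
    refine Finset.sum_congr rfl fun j _ => ?_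
    rw [Set.indicator_apply]
    split_ifs with h1 h2 h2 <;> simp_all [hA_def]
  rw [hG_eq] at hGs
  exact (ENNReal.ofReal_le_ofReal_iff (by positivity)).mp hGs

lemma coord_le_dist (u v : EuclideanSpace ℝ (Fin 3)) (m : Fin 3) :
    |u m - v m| ≤ dist u v := by
  rw [EuclideanSpace.dist_eq]
  have h1 : |u m - v m| = Real.sqrt (dist (u m) (v m) ^ 2) := by
    rw [Real.sqrt_sq_eq_abs, Real.dist_eq, abs_abs]
  rw [h1]
  exact Real.sqrt_le_sqrt (Finset.single_le_sum (f := fun i => dist (u i) (v i) ^ 2)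
    (fun i _ => sq_nonneg _) (Finset.mem_univ m))

/-- Cube-selection lemma: for distinct points `x_1,…,x_M` in `ℝ³` and any `δ > 0`, there is
an offset `z ∈ [0,δ)³` of the grid of half-open cubes of side `δ` such that the sum of
`1/|x_i − x_j|` over pairs lying in different cubes is at most `4M²/δ`. -/
theorem grid_offset_selection (M : ℕ) (x : Fin M → EuclideanSpace ℝ (Fin 3))
    (hx : Function.Injective x) (δ : ℝ) (hδ : 0 < δ) :
    ∃ z : EuclideanSpace ℝ (Fin 3), (∀ i, z i ∈ Ico (0:ℝ) δ) ∧
      (∑ i, ∑ j,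
          if i ≠ j ∧ ¬ (∀ m : Fin 3, ⌊(x i m - z m) / δ + 1/2⌋ = ⌊(x j m - z m) / δ + 1/2⌋)
          then 1 / dist (x i) (x j) else 0)
        ≤ 4 * (M : ℝ) ^ 2 / δ := by
  classical
  by_cases hM : M ≤ 1
  · refine ⟨0, fun i => by simp [hδ], ?_⟩
    haveI : Subsingleton (Fin M) := Fin.subsingleton_iff_le_one.mpr hM
    have hz : (∑ i, ∑ j : Fin M,
        if i ≠ j ∧ ¬ (∀ m : Fin 3, ⌊(x i m - (0:EuclideanSpace ℝ (Fin 3)) m) / δ + 1/2⌋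
          = ⌊(x j m - (0:EuclideanSpace ℝ (Fin 3)) m) / δ + 1/2⌋)
        then 1 / dist (x i) (x j) else 0) = 0 :=
      Finset.sum_eq_zero fun i _ => Finset.sum_eq_zero fun j _ => by
        rw [if_neg]; rintro ⟨hij, -⟩; exact hij (Subsingleton.elim i j)
    rw [hz]; positivity
  · push_neg at hM
    have hM2 : (2:ℝ) ≤ (M:ℝ) := by exact_mod_cast hM
    set w : Fin M → Fin M → ℝ := fun i j => if i = j then 0 else 1 / dist (x i) (x j)
      with hw_def
    have hw : ∀ i j, 0 ≤ w i j := fun i j => by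
      rw [hw_def]; dsimp only; split
      · exact le_refl 0
      · positivity
    have hww : ∀ m : Fin 3, ∀ i j, w i j * |x i m - x j m| ≤ 1 := by
      intro m i j
      rw [hw_def]; dsimp only; split_ifs with h
      · simp
      · have hd : 0 < dist (x i) (x j) := dist_pos.mpr fun he => h (hx he)
        rw [div_mul_eq_mul_div, one_mul, div_le_one hd]
        exact coord_le_dist (x i) (x j) m
    have H : ∀ m : Fin 3, ∃ s ∈ Ico (0:ℝ) δ,
        (∑ i, ∑ j, if ⌊(x i m - s) / δ + 1/2⌋ ≠ ⌊(x j m - s) / δ + 1/2⌋ then w i j else 0)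
          ≤ ((M:ℝ)^2 + 1) / δ :=
      fun m => exists_offset_1d (fun i => x i m) w hw (hww m) δ hδ
    choose s hs1 hs2 using H
    refine ⟨(WithLp.equiv 2 (Fin 3 → ℝ)).symm s,
      fun i => by simpa [WithLp.equiv_symm_apply, PiLp.toLp_apply] using hs1 i, ?_⟩
    simp only [WithLp.equiv_symm_apply, PiLp.toLp_apply]
    have step1 : (∑ i, ∑ j,
        if i ≠ j ∧ ¬ (∀ m : Fin 3, ⌊(x i m - s m) / δ + 1/2⌋ = ⌊(x j m - s m) / δ + 1/2⌋)
        then 1 / dist (x i) (x j) else 0)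
        ≤ ∑ i, ∑ j, ∑ m : Fin 3,
            (if ⌊(x i m - s m) / δ + 1/2⌋ ≠ ⌊(x j m - s m) / δ + 1/2⌋ then w i j else 0) := by
      refine Finset.sum_le_sum fun i _ => Finset.sum_le_sum fun j _ => ?_
      split_ifs with h
      · obtain ⟨hij, hne⟩ := h
        obtain ⟨m₀, hm₀⟩ := not_forall.mp hne
        have hsingle := Finset.single_le_sum
          (f := fun m => if ⌊(x i m - s m) / δ + 1/2⌋ ≠ ⌊(x j m - s m) / δ + 1/2⌋
            then w i j else 0)
          (fun m _ => by dsimp only; split <;> simp [hw i j]) (Finset.mem_univ m₀)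
        dsimp only at hsingle
        rw [if_pos hm₀] at hsingle
        calc 1 / dist (x i) (x j) = w i j := by rw [hw_def]; dsimp only; rw [if_neg hij]
          _ ≤ _ := hsingle
      · exact Finset.sum_nonneg fun m _ => by split <;> simp [hw i j]
    refine le_trans step1 ?_
    have step2 : (∑ i, ∑ j, ∑ m : Fin 3,
        (if ⌊(x i m - s m) / δ + 1/2⌋ ≠ ⌊(x j m - s m) / δ + 1/2⌋ then w i j else 0))
        = ∑ m : Fin 3, ∑ i, ∑ j,
            (if ⌊(x i m - s m) / δ + 1/2⌋ ≠ ⌊(x j m - s m) / δ + 1/2⌋ then w i j else 0) := by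
      rw [Finset.sum_congr rfl fun i (_ : i ∈ Finset.univ) => Finset.sum_comm]
      exact Finset.sum_comm
    rw [step2]
    calc (∑ m : Fin 3, ∑ i, ∑ j,
          (if ⌊(x i m - s m) / δ + 1/2⌋ ≠ ⌊(x j m - s m) / δ + 1/2⌋ then w i j else 0))
        ≤ ∑ _m : Fin 3, ((M:ℝ)^2 + 1) / δ := Finset.sum_le_sum fun m _ => hs2 m
      _ = 3 * (((M:ℝ)^2 + 1) / δ) := by
          rw [Finset.sum_const, Finset.card_univ, Fintype.card_fin, nsmul_eq_mul]
          norm_num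
      _ ≤ 4 * (M:ℝ)^2 / δ := by
          rw [show (3:ℝ) * (((M:ℝ)^2 + 1) / δ) = (3 * ((M:ℝ)^2 + 1)) / δ by ring,
            show (4:ℝ) * (M:ℝ)^2 / δ = (4 * (M:ℝ)^2) / δ by ring]
          have h3 : 3 * ((M:ℝ)^2 + 1) ≤ 4 * (M:ℝ)^2 := by nlinarith
          rw [div_le_div_iff₀ hδ hδ]
          nlinarith [mul_le_mul_of_nonneg_right h3 hδ.le]
end

section
/- Let x, y ∈ ℝ³ with x ≠ y, let δ > 0, and consider the shifted grid of half-open cubes Q_{k+z,δ} = z + δk + [−δ/2, δ/2)³ for k ∈ δℤ³, z ∈ [0,δ)³. Then the Lebesgue measure of the set of offsets z ∈ [0,δ)³ for which x and y lie in different cubes of the grid is at most 3·min(|x−y|, δ)·δ². -/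
open Set MeasureTheory

lemma floor_ne_floor_add_iff (u c : ℝ) (hc0 : 0 ≤ c) (hc1 : c < 1) :
    ⌊u⌋ ≠ ⌊u + c⌋ ↔ 1 ≤ Int.fract u + c := by
  have h1 : ⌊u + c⌋ = ⌊u⌋ + ⌊Int.fract u + c⌋ := by
    conv_lhs => rw [← Int.floor_add_fract u, add_assoc, Int.floor_intCast_add]
  have hw0 : 0 ≤ Int.fract u + c := add_nonneg (Int.fract_nonneg u) hc0
  constructor
  · intro h
    by_contra hlt
    push_neg at hlt
    have : ⌊u + c⌋ = ⌊u⌋ := by rw [h1, Int.floor_eq_zero_iff.mpr ⟨hw0, hlt⟩, add_zero]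
    exact h this.symm
  · intro h
    have : (1 : ℤ) ≤ ⌊Int.fract u + c⌋ := Int.le_floor.mpr (by exact_mod_cast h)
    rw [h1]
    omega

lemma one_dim_bad (a b δ : ℝ) (hδ : 0 < δ) (hab : a ≤ b) :
    volume {t : ℝ | t ∈ Ico 0 δ ∧ ⌊(a - t) / δ + 1/2⌋ ≠ ⌊(b - t) / δ + 1/2⌋}
      ≤ ENNReal.ofReal (min (b - a) δ) := by
  rcases le_or_gt δ (b - a) with hba | hba
  · calc volume {t : ℝ | t ∈ Ico 0 δ ∧ ⌊(a - t) / δ + 1/2⌋ ≠ ⌊(b - t) / δ + 1/2⌋}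
        ≤ volume (Ico (0:ℝ) δ) := measure_mono (fun t ht => ht.1)
      _ = ENNReal.ofReal δ := by rw [Real.volume_Ico, sub_zero]
      _ ≤ ENNReal.ofReal (min (b - a) δ) := by rw [min_eq_right hba]
  · set c := (b - a) / δ with hcdef
    set r := Int.fract (a / δ + 1/2) with hrdef
    have hc0 : 0 ≤ c := div_nonneg (by linarith) hδ.le
    have hc1 : c < 1 := (div_lt_one hδ).mpr hba
    have hr0 : 0 ≤ r := Int.fract_nonneg _
    have hr1 : r < 1 := Int.fract_lt_one _
    have hsub : {t : ℝ | t ∈ Ico 0 δ ∧ ⌊(a - t) / δ + 1/2⌋ ≠ ⌊(b - t) / δ + 1/2⌋}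
        ⊆ Icc 0 (δ * (r + c - 1)) ∪ Ioc (δ * r) (δ * min 1 (r + c)) := by
      rintro t ⟨⟨ht0, htδ⟩, hne⟩
      have hs1 : t / δ < 1 := (div_lt_one hδ).mpr htδ
      have hs0 : 0 ≤ t / δ := div_nonneg ht0 hδ.le
      have key : 1 ≤ Int.fract ((a - t) / δ + 1/2) + c := by
        have heq : (b - t) / δ + 1/2 = ((a - t) / δ + 1/2) + c := by
          rw [hcdef]; field_simp; ring
        exact (floor_ne_floor_add_iff _ c hc0 hc1).mp (heq ▸ hne)
      have hfr : Int.fract ((a - t) / δ + 1/2) = Int.fract (r - t / δ) := by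
        have heq2 : (a - t) / δ + 1/2 = (⌊a / δ + 1/2⌋ : ℝ) + (r - t / δ) := by
          rw [hrdef, Int.fract]; field_simp; ring
        rw [heq2, Int.fract_intCast_add]
      rw [hfr] at key
      rcases le_or_gt (t / δ) r with hcase | hcase
      · left
        have hself : Int.fract (r - t / δ) = r - t / δ :=
          Int.fract_eq_self.mpr ⟨by linarith, by linarith⟩
        rw [hself] at key
        refine ⟨ht0, ?_⟩
        have : t / δ ≤ r + c - 1 := by linarith
        calc t = δ * (t / δ) := by field_simp
          _ ≤ δ * (r + c - 1) := by nlinarith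
      · right
        have h1 : Int.fract (r - t / δ) = r - t / δ + 1 := by
          have hh := Int.fract_add_intCast (r - t / δ + 1) (-1)
          push_cast at hh
          rw [show r - t / δ + 1 + (-1 : ℝ) = r - t / δ by ring] at hh
          rw [hh]
          exact Int.fract_eq_self.mpr ⟨by linarith, by linarith⟩
        rw [h1] at key
        have hteq : t = δ * (t / δ) := by field_simp
        constructor
        · rw [hteq]; nlinarith
        · rcases min_cases 1 (r + c) with ⟨hm, hm'⟩ | ⟨hm, hm'⟩ <;> rw [hm] <;>
            rw [hteq] <;> nlinarith
    calc volume {t : ℝ | t ∈ Ico 0 δ ∧ ⌊(a - t) / δ + 1/2⌋ ≠ ⌊(b - t) / δ + 1/2⌋}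
        ≤ volume (Icc 0 (δ * (r + c - 1))) + volume (Ioc (δ * r) (δ * min 1 (r + c))) :=
        (measure_mono hsub).trans (measure_union_le _ _)
      _ ≤ ENNReal.ofReal (min (b - a) δ) := by
        rw [Real.volume_Icc, Real.volume_Ioc]
        have hmin : min (b - a) δ = δ * c := by
          rw [min_eq_left hba.le, hcdef]; field_simp
        rw [hmin]
        rcases le_or_gt (r + c) 1 with hrc | hrc
        · rw [min_eq_right hrc]
          have hz : ENNReal.ofReal (δ * (r + c - 1) - 0) = 0 := by
            rw [ENNReal.ofReal_eq_zero]; nlinarith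
          rw [hz, zero_add]
          exact ENNReal.ofReal_le_ofReal (by nlinarith)
        · rw [min_eq_left hrc.le,
            ← ENNReal.ofReal_add (by nlinarith) (by nlinarith)]
          exact ENNReal.ofReal_le_ofReal (by nlinarith)

lemma one_dim_bad' (a b δ : ℝ) (hδ : 0 < δ) :
    volume {t : ℝ | t ∈ Ico 0 δ ∧ ⌊(a - t) / δ + 1/2⌋ ≠ ⌊(b - t) / δ + 1/2⌋}
      ≤ ENNReal.ofReal (min |a - b| δ) := by
  rcases le_total a b with h | h
  · rw [abs_of_nonpos (by linarith), neg_sub]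
    exact one_dim_bad a b δ hδ h
  · rw [abs_of_nonneg (by linarith)]
    have h2 := one_dim_bad b a δ hδ h
    convert h2 using 3
    ext t
    simp only [mem_setOf_eq, ne_eq]
    tauto

/-- Averaging estimate: for `x ≠ y` in `ℝ³` and `δ > 0`, the set of grid offsets
`z ∈ [0,δ)³` for which `x` and `y` lie in different cubes of the shifted grid of half-open
cubes of side `δ` has Lebesgue measure at most `3 · min(|x−y|, δ) · δ²`. -/
theorem measure_of_separating_offsets (x y : EuclideanSpace ℝ (Fin 3)) (hxy : x ≠ y)
    (δ : ℝ) (hδ : 0 < δ) :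
    volume {z : EuclideanSpace ℝ (Fin 3) | (∀ i, z i ∈ Ico (0:ℝ) δ) ∧
        ¬ (∀ i : Fin 3, ⌊(x i - z i) / δ + 1/2⌋ = ⌊(y i - z i) / δ + 1/2⌋)}
      ≤ ENNReal.ofReal (3 * min (dist x y) δ * δ ^ 2) := by
  set S' : Set (Fin 3 → ℝ) := {z | (∀ i, z i ∈ Ico (0:ℝ) δ) ∧
      ¬ (∀ i : Fin 3, ⌊(x i - z i) / δ + 1/2⌋ = ⌊(y i - z i) / δ + 1/2⌋)} with hS'def
  have hS'meas : MeasurableSet S' := by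
    have h1 : MeasurableSet {z : Fin 3 → ℝ | ∀ i, z i ∈ Ico (0:ℝ) δ} := by
      rw [setOf_forall]
      exact MeasurableSet.iInter fun i => (measurable_pi_apply i) measurableSet_Ico
    have h2 : MeasurableSet {z : Fin 3 → ℝ |
        ∀ i : Fin 3, ⌊(x i - z i) / δ + 1/2⌋ = ⌊(y i - z i) / δ + 1/2⌋} := by
      rw [setOf_forall]
      refine MeasurableSet.iInter fun i => ?_
      exact measurableSet_eq_fun
        (Measurable.floor (by fun_prop))
        (Measurable.floor (by fun_prop))
    exact h1.inter h2.compl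
  have hvol : volume {z : EuclideanSpace ℝ (Fin 3) | (∀ i, z i ∈ Ico (0:ℝ) δ) ∧
      ¬ (∀ i : Fin 3, ⌊(x i - z i) / δ + 1/2⌋ = ⌊(y i - z i) / δ + 1/2⌋)} = volume S' := by
    rw [← (EuclideanSpace.volume_preserving_symm_measurableEquiv_toLp (Fin 3)).measure_preimage
      hS'meas.nullMeasurableSet]
    rfl
  rw [hvol]
  -- the bad set for coordinate i
  set Bad : Fin 3 → Set ℝ := fun i =>
    {t : ℝ | t ∈ Ico 0 δ ∧ ⌊(x i - t) / δ + 1/2⌋ ≠ ⌊(y i - t) / δ + 1/2⌋} with hBaddef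
  set F : Fin 3 → Fin 3 → Set ℝ := fun i j => if j = i then Bad i else Ico 0 δ with hFdef
  have hsub : S' ⊆ ⋃ i : Fin 3, univ.pi (F i) := by
    intro z hz
    obtain ⟨hbox, hne⟩ := hz
    push_neg at hne
    obtain ⟨i, hi⟩ := hne
    refine mem_iUnion.mpr ⟨i, ?_⟩
    intro j _
    simp only [hFdef]
    split
    · next h => subst h; exact ⟨hbox j, hi⟩
    · exact hbox j
  have hcoord : ∀ i, |x i - y i| ≤ dist x y := by
    intro i
    rw [← Real.dist_eq, ← Real.sqrt_sq dist_nonneg, EuclideanSpace.dist_eq]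
    exact Real.sqrt_le_sqrt
      (Finset.single_le_sum (f := fun j => dist (x j) (y j) ^ 2)
        (fun j _ => sq_nonneg _) (Finset.mem_univ i))
  have hmin_nonneg : 0 ≤ min (dist x y) δ := le_min dist_nonneg hδ.le
  have hbound : ∀ i : Fin 3, volume (univ.pi (F i)) ≤
      ENNReal.ofReal (min (dist x y) δ * δ ^ 2) := by
    intro i
    rw [volume_pi_pi]
    have hBadle : volume (Bad i) ≤ ENNReal.ofReal (min (dist x y) δ) := by
      refine (one_dim_bad' (x i) (y i) δ hδ).trans (ENNReal.ofReal_le_ofReal ?_)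
      exact min_le_min (hcoord i) le_rfl
    have hIco : volume (Ico (0:ℝ) δ) = ENNReal.ofReal δ := by
      rw [Real.volume_Ico, sub_zero]
    have hprod : ∏ j, volume (F i j)
        = volume (Bad i) * (ENNReal.ofReal δ * ENNReal.ofReal δ) := by
      fin_cases i <;>
        simp [Fin.prod_univ_three, hFdef, hIco] <;> ring
    rw [hprod]
    calc volume (Bad i) * (ENNReal.ofReal δ * ENNReal.ofReal δ)
        ≤ ENNReal.ofReal (min (dist x y) δ) * (ENNReal.ofReal δ * ENNReal.ofReal δ) := by
          exact mul_le_mul_left hBadle _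
      _ = ENNReal.ofReal (min (dist x y) δ * δ ^ 2) := by
          rw [← ENNReal.ofReal_mul hδ.le, ← ENNReal.ofReal_mul hmin_nonneg]
          ring_nf
  calc volume S' ≤ ∑' i : Fin 3, volume (univ.pi (F i)) :=
      (measure_mono hsub).trans (measure_iUnion_le _)
    _ ≤ ∑' _ : Fin 3, ENNReal.ofReal (min (dist x y) δ * δ ^ 2) :=
      ENNReal.tsum_le_tsum hbound
    _ = 3 * ENNReal.ofReal (min (dist x y) δ * δ ^ 2) := by
      rw [tsum_fintype]
      simp [Finset.sum_const]
    _ = ENNReal.ofReal (3 * min (dist x y) δ * δ ^ 2) := by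
      rw [← ENNReal.ofReal_ofNat 3, ← ENNReal.ofReal_mul (by norm_num)]
      ring_nf
end
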